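/- If 0 ≤ c < 1/2 and the learning rate is chosen as η = max(1 − 2c, √(8·log N / T)), then the exponentially weighted forecaster with abstention satisfies R_T = ∑_{t=1}^T E[ℓ̂_t] − min_{i∈[N]} ∑_{t=1}^T ℓ_{t,i} ≤ 2·min( (log N)/(1 − 2c), √(T·log N / 2) ). -/

import Mathlib

noncomputable section

/-- Binary loss of expert `i` in round `t`: `1[y_{t,i} ≠ y_t]`. -/
def expertLoss {N : ℕ} (adv : ℕ → Fin N → ℝ) (y : ℕ → ℝ) (t : ℕ) (i : Fin N) : ℝ :=
  if adv t i = y t then 0 else 1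

/-- Normalized exponential weight `q_{t,i}` of expert `i` in round `t`. -/
def ewQ {N : ℕ} (η : ℝ) (adv : ℕ → Fin N → ℝ) (y : ℕ → ℝ) (t : ℕ) (i : Fin N) : ℝ :=
  Real.exp (-η * ∑ k ∈ Finset.range t, expertLoss adv y k i) /
    ∑ j, Real.exp (-η * ∑ k ∈ Finset.range t, expertLoss adv y k j)

/-- Aggregated prediction `p_t = ∑ i, q_{t,i} y_{t,i}`. -/
def aggP {N : ℕ} (η : ℝ) (adv : ℕ → Fin N → ℝ) (y : ℕ → ℝ) (t : ℕ) : ℝ :=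
  ∑ i, ewQ η adv y t i * adv t i

/-- Expected per-round loss of the exponentially weighted forecaster with abstention:
with `p* = max(p_t, 1 - p_t)`, `k* = 1[p_t ≥ 1/2]` and `α_t = 2(1 - p*)`, the expected
loss is `α_t · c_t + (1 - α_t) · 1[k* ≠ y_t]`. -/
def expAlgLoss {N : ℕ} (η : ℝ) (c : ℕ → ℝ) (adv : ℕ → Fin N → ℝ) (y : ℕ → ℝ) (t : ℕ) : ℝ :=
  let p := aggP η adv y t
  let pstar := max p (1 - p)
  let kstar : ℝ := if (1 : ℝ) / 2 ≤ p then 1 else 0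
  let α := 2 * (1 - pstar)
  α * c t + (1 - α) * (if kstar = y t then 0 else 1)

end

section AuxAbst

lemma D_pos' (m : ℝ) (hm0 : 0 ≤ m) (hm1 : m ≤ 1) (x : ℝ) :
    0 < 1 - m + m * Real.exp (-x) := by
  rcases le_or_gt (Real.exp (-x)) 1 with h | h
  · nlinarith [Real.exp_pos (-x)]
  · nlinarith [Real.exp_pos (-x)]

lemma bernoulli_hoeffding (m : ℝ) (hm0 : 0 ≤ m) (hm1 : m ≤ 1) {x : ℝ} (hx : 0 ≤ x) :
    Real.log (1 - m + m * Real.exp (-x)) ≤ -(x * m) + x ^ 2 / 8 := by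
  set D : ℝ → ℝ := fun t => 1 - m + m * Real.exp (-t) with hDdef
  have hD : ∀ t, 0 < D t := fun t => D_pos' m hm0 hm1 t
  have hDd : ∀ t : ℝ, HasDerivAt D (-(m * Real.exp (-t))) t := by
    intro t
    have h1 : HasDerivAt (fun s : ℝ => -s) (-1) t := (hasDerivAt_id t).neg
    have h2 : HasDerivAt (fun s : ℝ => Real.exp (-s)) (Real.exp (-t) * (-1)) t :=
      (Real.hasDerivAt_exp (-t)).comp t h1
    have h3 : HasDerivAt (fun s : ℝ => m * Real.exp (-s)) (m * (Real.exp (-t) * (-1))) t :=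
      h2.const_mul m
    have h4 := h3.const_add (1 - m)
    exact h4.congr_deriv (by ring)
  set u : ℝ → ℝ := fun t => m * Real.exp (-t) / D t with hudef
  have hud : ∀ t : ℝ, HasDerivAt u (-(u t * (1 - u t))) t := by
    intro t
    have hm' : HasDerivAt (fun s : ℝ => m * Real.exp (-s)) (-(m * Real.exp (-t))) t := by
      have h1 : HasDerivAt (fun s : ℝ => -s) (-1) t := (hasDerivAt_id t).neg
      have h2 := ((Real.hasDerivAt_exp (-t)).comp t h1).const_mul m
      exact h2.congr_deriv (by ring)
    have h := hm'.div (hDd t) (ne_of_gt (hD t))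
    refine h.congr_deriv ?_
    have hDt := (hD t).ne'
    rw [show u t = m * Real.exp (-t) / D t from rfl]
    field_simp
    ring
  set G1 : ℝ → ℝ := fun t => t / 4 - m + u t with hG1def
  have hG1d : ∀ t : ℝ, HasDerivAt G1 (1 / 4 - u t * (1 - u t)) t := by
    intro t
    have h1 : HasDerivAt (fun s : ℝ => s / 4 - m) (1 / 4) t := by
      have := ((hasDerivAt_id t).div_const 4).sub_const m
      simpa using this
    have h2 := h1.add (hud t)
    exact h2.congr_deriv (by ring)
  have hG1mono : MonotoneOn G1 (Set.Ici (0 : ℝ)) := by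
    apply monotoneOn_of_hasDerivWithinAt_nonneg (convex_Ici 0)
      (fun t _ => (hG1d t).continuousAt.continuousWithinAt)
      (fun t _ => (hG1d t).hasDerivWithinAt)
    intro t _
    nlinarith [sq_nonneg (u t - 1 / 2)]
  have hG1zero : G1 0 = 0 := by
    simp only [hG1def, hudef, hDdef]
    norm_num
  have hG1nonneg : ∀ t ∈ Set.Ici (0 : ℝ), 0 ≤ G1 t := by
    intro t ht
    have := hG1mono (Set.self_mem_Ici) ht ht
    rwa [hG1zero] at this
  set G : ℝ → ℝ := fun t => t ^ 2 / 8 - m * t - Real.log (D t) with hGdef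
  have hGd : ∀ t : ℝ, HasDerivAt G (G1 t) t := by
    intro t
    have h1 : HasDerivAt (fun s : ℝ => s ^ 2 / 8 - m * s) (2 * t / 8 - m) t := by
      have ha := ((hasDerivAt_pow 2 t).div_const 8)
      have hb := (hasDerivAt_id t).const_mul m
      have := ha.sub hb
      exact this.congr_deriv (by ring)
    have h2 : HasDerivAt (fun s : ℝ => Real.log (D s)) (-(m * Real.exp (-t)) / D t) t :=
      (hDd t).log (ne_of_gt (hD t))
    have := h1.sub h2
    refine this.congr_deriv ?_
    simp only [hG1def, hudef]
    field_simp
    ring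
  have hGmono : MonotoneOn G (Set.Ici (0 : ℝ)) := by
    apply monotoneOn_of_hasDerivWithinAt_nonneg (convex_Ici 0)
      (fun t _ => (hGd t).continuousAt.continuousWithinAt)
      (fun t _ => (hGd t).hasDerivWithinAt)
    intro t ht
    exact hG1nonneg t (interior_subset ht)
  have hGzero : G 0 = 0 := by
    simp [hGdef, hDdef]
  have := hGmono (Set.self_mem_Ici) (Set.mem_Ici.2 hx) hx
  rw [hGzero] at this
  simp only [hGdef, hDdef] at this
  linarith

/-- Slow per-round bound: the algorithm's loss is at most the mixture loss `mv`. -/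
lemma abst_le_m (p yv cst mv : ℝ) (hp0 : 0 ≤ p) (hp1 : p ≤ 1)
    (hyv : yv = 0 ∨ yv = 1) (hc0 : 0 ≤ cst) (hc1 : cst ≤ 1 / 2)
    (hmv : mv = if yv = 1 then 1 - p else p) :
    2 * (1 - max p (1 - p)) * cst +
      (1 - 2 * (1 - max p (1 - p))) *
        (if (if (1:ℝ)/2 ≤ p then (1:ℝ) else (0:ℝ)) = yv then (0:ℝ) else 1)
    ≤ mv := by
  rcases le_or_gt (1/2 : ℝ) p with hhalf | hhalf <;> rcases hyv with hyv' | hyv' <;> subst hyv'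
  · rw [max_eq_left (by linarith), if_pos hhalf, if_neg (by norm_num), hmv,
      if_neg (by norm_num)]
    nlinarith
  · rw [max_eq_left (by linarith), if_pos hhalf, if_pos rfl, hmv, if_pos rfl]
    nlinarith
  · rw [max_eq_right (by linarith), if_neg (not_le.2 hhalf), if_pos rfl, hmv,
      if_neg (by norm_num)]
    nlinarith
  · rw [max_eq_right (by linarith), if_neg (not_le.2 hhalf), if_neg (by norm_num), hmv,
      if_pos rfl]
    nlinarith

/-- Fast per-round bound: if `η ≤ 1 - 2c`, the algorithm's loss is at most the mix loss. -/
lemma abst_le_mix (p yv cst mv η : ℝ) (hp0 : 0 ≤ p) (hp1 : p ≤ 1)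
    (hyv : yv = 0 ∨ yv = 1) (hc0 : 0 ≤ cst) (hη0 : 0 < η) (hη1 : η ≤ 1 - 2 * cst)
    (hmv : mv = if yv = 1 then 1 - p else p) :
    2 * (1 - max p (1 - p)) * cst +
      (1 - 2 * (1 - max p (1 - p))) *
        (if (if (1:ℝ)/2 ≤ p then (1:ℝ) else (0:ℝ)) = yv then (0:ℝ) else 1)
    ≤ - Real.log (1 - mv + mv * Real.exp (-η)) / η := by
  have hmv0 : 0 ≤ mv := by rcases hyv with h | h <;> subst h <;> simp [hmv] <;> linarith
  have hmv1 : mv ≤ 1 := by rcases hyv with h | h <;> subst h <;> simp [hmv] <;> linarith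
  set a := Real.exp (-η) with hadef
  have hapos : 0 < a := Real.exp_pos _
  have hz : 0 < 1 - mv + mv * a := D_pos' mv hmv0 hmv1 η
  have ha1 : 1 - η ≤ a := by
    have := Real.add_one_le_exp (-η); linarith
  have haη : a * (1 + η) ≤ 1 := by
    have h1 : 1 + η ≤ Real.exp η := by have := Real.add_one_le_exp η; linarith
    have h2 : a * Real.exp η = 1 := by
      rw [hadef, ← Real.exp_add]; simp
    nlinarith
  have hquad : Real.exp η ≤ 1 + η + η ^ 2 := by
    have h := Real.exp_bound' (le_of_lt hη0) (by linarith : η ≤ 1) (n := 2) (by norm_num)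
    simp [Finset.sum_range_succ] at h
    nlinarith [sq_nonneg η]
  have hF2 : 1 ≤ a * (1 + 2 * (1 - cst) * η) := by
    have h2 : a * Real.exp η = 1 := by rw [hadef, ← Real.exp_add]; simp
    have : Real.exp η ≤ 1 + 2 * (1 - cst) * η := by nlinarith
    nlinarith
  have hlog1 : Real.log (1 - mv + mv * a) ≤ -(mv * (1 - a)) := by
    have := Real.log_le_sub_one_of_pos hz
    linarith
  have hlog2 : a * Real.log (1 - mv + mv * a) ≤ a * (-η) + ((1 - mv) * (1 - a)) := by
    have hza : 0 < (1 - mv + mv * a) / a := div_pos hz hapos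
    have h := Real.log_le_sub_one_of_pos hza
    rw [Real.log_div (ne_of_gt hz) (ne_of_gt hapos)] at h
    have hla : Real.log a = -η := by rw [hadef, Real.log_exp]
    rw [hla] at h
    have h' := mul_le_mul_of_nonneg_left h (le_of_lt hapos)
    have hrw : a * ((1 - mv + mv * a) / a - 1) = (1 - mv) * (1 - a) := by
      field_simp; ring
    nlinarith [h']
  have hcor : 2 * cst * η ≤ 1 - a := by nlinarith
  rcases le_or_gt (1/2 : ℝ) p with hhalf | hhalf <;> rcases hyv with hyv' | hyv' <;>
    subst hyv' <;> rw [le_div_iff₀ hη0]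
  · rw [max_eq_left (by linarith), if_pos hhalf, if_neg (by norm_num)]
    have hmvp : mv = p := by simp [hmv]
    nlinarith [mul_nonneg (sub_nonneg.2 hmv1) (sub_nonneg.2 hF2), hlog2, hapos]
  · rw [max_eq_left (by linarith), if_pos hhalf, if_pos rfl]
    have hmvp : mv = 1 - p := by simp [hmv]
    nlinarith [hlog1, mul_nonneg hmv0 (sub_nonneg.2 hcor)]
  · rw [max_eq_right (by linarith), if_neg (not_le.2 hhalf), if_pos rfl]
    have hmvp : mv = p := by simp [hmv]
    nlinarith [hlog1, mul_nonneg hmv0 (sub_nonneg.2 hcor)]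
  · rw [max_eq_right (by linarith), if_neg (not_le.2 hhalf), if_neg (by norm_num)]
    have hmvp : mv = 1 - p := by simp [hmv]
    nlinarith [mul_nonneg (sub_nonneg.2 hmv1) (sub_nonneg.2 hF2), hlog2, hapos]

end AuxAbst

set_option maxHeartbeats 2000000 in
/-- Corollary 2: with the tuned learning rate `η = max(1 - 2c, √(8 log N / T))`, the
exponentially weighted forecaster with abstention satisfies
`R_T ≤ 2 · min((log N)/(1 - 2c), √(T log N / 2))`. -/
theorem abstention_tuned_rate (N T : ℕ) (hN : 2 ≤ N) (hT : 1 ≤ T) (c : ℝ)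
    (hc0 : 0 ≤ c) (hc : c < 1 / 2)
    (adv : ℕ → Fin N → ℝ) (y : ℕ → ℝ)
    (hadv : ∀ t i, adv t i = 0 ∨ adv t i = 1) (hy : ∀ t, y t = 0 ∨ y t = 1) :
    (∑ t ∈ Finset.range T,
        expAlgLoss (max (1 - 2 * c) (Real.sqrt (8 * Real.log N / T))) (fun _ => c) adv y t)
        - ⨅ i : Fin N, ∑ t ∈ Finset.range T, expertLoss adv y t i
      ≤ 2 * min (Real.log N / (1 - 2 * c)) (Real.sqrt (T * Real.log N / 2)) := by
  have hc2 : (0:ℝ) < 1 - 2 * c := by linarith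
  set s := Real.sqrt (8 * Real.log N / T) with hsdef
  set η := max (1 - 2 * c) s with hηdef
  have hη1 : 1 - 2 * c ≤ η := le_max_left _ _
  have hη0 : 0 < η := lt_of_lt_of_le hc2 hη1
  haveI : Nonempty (Fin N) := ⟨⟨0, by omega⟩⟩
  have hN1 : (1:ℝ) < (N:ℝ) := by exact_mod_cast Nat.lt_of_lt_of_le one_lt_two hN
  have hlogN : 0 < Real.log N := Real.log_pos hN1
  have hT0 : (0:ℝ) < (T:ℝ) := by exact_mod_cast hT
  set W : ℕ → ℝ :=
    fun t => ∑ j, Real.exp (-η * ∑ k ∈ Finset.range t, expertLoss adv y k j) with hWdef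
  have hWpos : ∀ t, 0 < W t := fun t =>
    Finset.sum_pos (fun j _ => Real.exp_pos _) Finset.univ_nonempty
  -- per-round analysis
  have round : ∀ t, ∃ mv : ℝ, 0 ≤ mv ∧ mv ≤ 1 ∧
      W (t + 1) = W t * (1 - mv + mv * Real.exp (-η)) ∧
      expAlgLoss η (fun _ => c) adv y t ≤ mv ∧
      (η ≤ 1 - 2 * c →
        expAlgLoss η (fun _ => c) adv y t ≤
          - Real.log (1 - mv + mv * Real.exp (-η)) / η) := by
    intro t
    set p := aggP η adv y t with hpdef
    have hWq : ∀ i : Fin N, ewQ η adv y t i =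
        Real.exp (-η * ∑ k ∈ Finset.range t, expertLoss adv y k i) / W t := fun i => rfl
    have hq0 : ∀ i : Fin N, 0 ≤ ewQ η adv y t i := fun i => by
      rw [hWq]; exact div_nonneg (Real.exp_pos _).le (hWpos t).le
    have hqsum : ∑ i, ewQ η adv y t i = 1 := by
      simp only [hWq]
      rw [← Finset.sum_div]
      exact div_self (hWpos t).ne'
    have hp0 : 0 ≤ p := by
      rw [hpdef, aggP]
      exact Finset.sum_nonneg fun i _ => mul_nonneg (hq0 i)
        (by rcases hadv t i with h | h <;> rw [h] <;> norm_num)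
    have hp1 : p ≤ 1 := by
      rw [hpdef, aggP, ← hqsum]
      exact Finset.sum_le_sum fun i _ => by
        rcases hadv t i with h | h <;> rw [h] <;> nlinarith [hq0 i]
    refine ⟨if y t = 1 then 1 - p else p, ?_, ?_, ?_, ?_, ?_⟩
    · split <;> linarith
    · split <;> linarith
    · -- weight recursion
      have hsumA : (∑ j, Real.exp (-η * ∑ k ∈ Finset.range t, expertLoss adv y k j)
          * adv t j) = W t * p := by
        rw [hpdef, aggP, Finset.mul_sum]
        refine Finset.sum_congr rfl fun j _ => ?_
        rw [hWq]
        have hWt := (hWpos t).ne'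
        field_simp
      have hLval : ∀ j, expertLoss adv y t j =
          if y t = 1 then 1 - adv t j else adv t j := by
        intro j
        rcases hy t with h | h <;> rcases hadv t j with h2 | h2 <;>
          simp [expertLoss, h, h2] <;> norm_num
      have hstep : W (t + 1) = ∑ j,
          Real.exp (-η * ∑ k ∈ Finset.range t, expertLoss adv y k j)
            * (1 - expertLoss adv y t j * (1 - Real.exp (-η))) := by
        show (∑ j, Real.exp (-η * ∑ k ∈ Finset.range (t + 1), expertLoss adv y k j)) = _
        refine Finset.sum_congr rfl fun j _ => ?_
        rw [Finset.sum_range_succ, show -η * ((∑ k ∈ Finset.range t, expertLoss adv y k j)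
            + expertLoss adv y t j) = -η * (∑ k ∈ Finset.range t, expertLoss adv y k j)
            + -η * expertLoss adv y t j by ring, Real.exp_add]
        congr 1
        have hL01 : expertLoss adv y t j = 0 ∨ expertLoss adv y t j = 1 := by
          unfold expertLoss; split <;> simp
        rcases hL01 with h | h <;> rw [h] <;> simp
      rw [hstep]
      have hexpand : ∀ j : Fin N,
          Real.exp (-η * ∑ k ∈ Finset.range t, expertLoss adv y k j)
            * (1 - expertLoss adv y t j * (1 - Real.exp (-η)))
          = Real.exp (-η * ∑ k ∈ Finset.range t, expertLoss adv y k j)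
            - (1 - Real.exp (-η)) *
              (Real.exp (-η * ∑ k ∈ Finset.range t, expertLoss adv y k j)
                * expertLoss adv y t j) := fun j => by ring
      rw [Finset.sum_congr rfl fun j _ => hexpand j, Finset.sum_sub_distrib,
        ← Finset.mul_sum]
      have hsumL : (∑ j, Real.exp (-η * ∑ k ∈ Finset.range t, expertLoss adv y k j)
          * expertLoss adv y t j) = W t * (if y t = 1 then 1 - p else p) := by
        rcases hy t with h | h
        · rw [if_neg (by rw [h]; norm_num)]
          rw [← hsumA]
          refine Finset.sum_congr rfl fun j _ => ?_
          rw [hLval j, if_neg (by rw [h]; norm_num)]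
        · rw [if_pos h]
          have heq : (∑ j, Real.exp (-η * ∑ k ∈ Finset.range t, expertLoss adv y k j)
              * expertLoss adv y t j)
              = (∑ j, (Real.exp (-η * ∑ k ∈ Finset.range t, expertLoss adv y k j)
                - Real.exp (-η * ∑ k ∈ Finset.range t, expertLoss adv y k j) * adv t j)) := by
            refine Finset.sum_congr rfl fun j _ => ?_
            rw [hLval j, if_pos h]; ring
          rw [heq, Finset.sum_sub_distrib, hsumA]
          have : (∑ j, Real.exp (-η * ∑ k ∈ Finset.range t, expertLoss adv y k j)) = W t :=
            rfl
          rw [this]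
          ring
      rw [hsumL]
      ring
    · -- slow: alg loss ≤ mixture loss
      exact abst_le_m p (y t) c (if y t = 1 then 1 - p else p) hp0 hp1 (hy t) hc0
        (le_of_lt hc) rfl
    · -- fast
      intro hsm
      exact abst_le_mix p (y t) c (if y t = 1 then 1 - p else p) η hp0 hp1 (hy t) hc0
        hη0 hsm rfl
  choose mv hmv0 hmv1 hWrec hAm hAmix using round
  have hzpos : ∀ t, 0 < 1 - mv t + mv t * Real.exp (-η) :=
    fun t => D_pos' _ (hmv0 t) (hmv1 t) η
  have hlogW : ∀ t, Real.log (1 - mv t + mv t * Real.exp (-η))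
      = Real.log (W (t + 1)) - Real.log (W t) := by
    intro t
    rw [hWrec t, Real.log_mul (hWpos t).ne' (hzpos t).ne']
    ring
  have slow_t : ∀ t, expAlgLoss η (fun _ => c) adv y t ≤
      (Real.log (W t) - Real.log (W (t + 1))) / η + η / 8 := by
    intro t
    have hb := bernoulli_hoeffding (mv t) (hmv0 t) (hmv1 t) hη0.le
    rw [hlogW t] at hb
    have h4 : (mv t - η / 8) * η ≤ Real.log (W t) - Real.log (W (t + 1)) := by nlinarith
    have h5 : mv t - η / 8 ≤ (Real.log (W t) - Real.log (W (t + 1))) / η :=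
      (le_div_iff₀ hη0).2 h4
    have h6 := hAm t
    linarith
  have fast_t : η ≤ 1 - 2 * c → ∀ t, expAlgLoss η (fun _ => c) adv y t ≤
      (Real.log (W t) - Real.log (W (t + 1))) / η := by
    intro hsm t
    have h := hAmix t hsm
    rwa [hlogW t, show -(Real.log (W (t + 1)) - Real.log (W t))
      = Real.log (W t) - Real.log (W (t + 1)) by ring] at h
  -- telescoping bound
  have telesum : ∀ i : Fin N,
      (∑ t ∈ Finset.range T, (Real.log (W t) - Real.log (W (t + 1))) / η)
      ≤ Real.log N / η + ∑ t ∈ Finset.range T, expertLoss adv y t i := by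
    intro i
    rw [← Finset.sum_div, Finset.sum_range_sub' (fun t => Real.log (W t)) T]
    have hW0 : W 0 = N := by
      show (∑ j : Fin N, Real.exp (-η * ∑ k ∈ Finset.range 0, expertLoss adv y k j)) = N
      simp
    have hWT : Real.exp (-η * ∑ k ∈ Finset.range T, expertLoss adv y k i) ≤ W T :=
      Finset.single_le_sum (f := fun j =>
        Real.exp (-η * ∑ k ∈ Finset.range T, expertLoss adv y k j))
        (fun j _ => (Real.exp_pos _).le) (Finset.mem_univ i)
    have hWTlog : -η * (∑ k ∈ Finset.range T, expertLoss adv y k i) ≤ Real.log (W T) := by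
      rw [← Real.log_exp (-η * ∑ k ∈ Finset.range T, expertLoss adv y k i)]
      exact Real.log_le_log (Real.exp_pos _) hWT
    rw [hW0]
    have h1 : Real.log N - Real.log (W T)
        ≤ Real.log N + η * ∑ k ∈ Finset.range T, expertLoss adv y k i := by nlinarith
    calc (Real.log N - Real.log (W T)) / η
        ≤ (Real.log N + η * ∑ k ∈ Finset.range T, expertLoss adv y k i) / η := by
          gcongr
      _ = Real.log N / η + ∑ k ∈ Finset.range T, expertLoss adv y k i := by
          rw [add_div, mul_comm η, mul_div_assoc, div_self hη0.ne', mul_one]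
  have regret_slow : ∀ i : Fin N,
      (∑ t ∈ Finset.range T, expAlgLoss η (fun _ => c) adv y t)
      ≤ (Real.log N / η + (T:ℝ) * (η / 8)) + ∑ t ∈ Finset.range T, expertLoss adv y t i := by
    intro i
    have h1 : (∑ t ∈ Finset.range T, expAlgLoss η (fun _ => c) adv y t)
        ≤ ∑ t ∈ Finset.range T, ((Real.log (W t) - Real.log (W (t + 1))) / η + η / 8) :=
      Finset.sum_le_sum fun t _ => slow_t t
    rw [Finset.sum_add_distrib, Finset.sum_const, Finset.card_range, nsmul_eq_mul] at h1
    have h2 := telesum i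
    linarith
  have regret_fast : η ≤ 1 - 2 * c → ∀ i : Fin N,
      (∑ t ∈ Finset.range T, expAlgLoss η (fun _ => c) adv y t)
      ≤ Real.log N / η + ∑ t ∈ Finset.range T, expertLoss adv y t i := by
    intro hsm i
    have h1 : (∑ t ∈ Finset.range T, expAlgLoss η (fun _ => c) adv y t)
        ≤ ∑ t ∈ Finset.range T, (Real.log (W t) - Real.log (W (t + 1))) / η :=
      Finset.sum_le_sum fun t _ => fast_t hsm t
    have h2 := telesum i
    linarith
  -- from pointwise expert bounds to the infimum
  have key : ∀ R : ℝ,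
      (∀ i : Fin N, (∑ t ∈ Finset.range T, expAlgLoss η (fun _ => c) adv y t)
        ≤ R + ∑ t ∈ Finset.range T, expertLoss adv y t i) →
      (∑ t ∈ Finset.range T, expAlgLoss η (fun _ => c) adv y t)
        - (⨅ i : Fin N, ∑ t ∈ Finset.range T, expertLoss adv y t i) ≤ R := by
    intro R h
    have : (∑ t ∈ Finset.range T, expAlgLoss η (fun _ => c) adv y t) - R
        ≤ ⨅ i : Fin N, ∑ t ∈ Finset.range T, expertLoss adv y t i :=
      le_ciInf fun i => by linarith [h i]
    linarith
  -- endgame numerics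
  have hTlogN : 0 < (T:ℝ) * Real.log N := mul_pos hT0 hlogN
  rcases le_total s (1 - 2 * c) with hcase | hcase
  · -- η = 1 - 2c : fast regime
    have hηeq : η = 1 - 2 * c := max_eq_left hcase
    have hreg := key _ (regret_fast (le_of_eq hηeq))
    have hηr : Real.log N / η = Real.log N / (1 - 2 * c) := by rw [hηeq]
    have hspos : 0 < s := Real.sqrt_pos.2 (div_pos (by linarith) hT0)
    have hs2 : s ^ 2 = 8 * Real.log N / T :=
      Real.sq_sqrt (le_of_lt (div_pos (by linarith) hT0))
    have hid1 : Real.log N / s = Real.sqrt ((T:ℝ) * Real.log N / 8) := by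
      rw [show (T:ℝ) * Real.log N / 8 = (Real.log N / s) ^ 2 by
        rw [div_pow, hs2]; field_simp]
      rw [Real.sqrt_sq (div_nonneg hlogN.le hspos.le)]
    have hB1B2 : Real.log N / (1 - 2 * c) ≤ Real.sqrt ((T:ℝ) * Real.log N / 2) := by
      have h1 : Real.log N / (1 - 2 * c) ≤ Real.log N / s := by gcongr
      have h2 : Real.sqrt ((T:ℝ) * Real.log N / 8) ≤ Real.sqrt ((T:ℝ) * Real.log N / 2) :=
        Real.sqrt_le_sqrt (by linarith)
      rw [hid1] at h1
      linarith
    rw [min_eq_left hB1B2]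
    have hB1pos : 0 < Real.log N / (1 - 2 * c) := div_pos hlogN hc2
    linarith [hreg, hηr]
  · -- η = s : slow regime
    have hηeq : η = s := max_eq_right hcase
    have hspos : 0 < s := lt_of_lt_of_le hc2 hcase
    have hs2 : s ^ 2 = 8 * Real.log N / T :=
      Real.sq_sqrt (le_of_lt (div_pos (by linarith) hT0))
    have hreg := key _ (regret_slow)
    have hid1 : Real.log N / s = Real.sqrt ((T:ℝ) * Real.log N / 8) := by
      rw [show (T:ℝ) * Real.log N / 8 = (Real.log N / s) ^ 2 by
        rw [div_pow, hs2]; field_simp]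
      rw [Real.sqrt_sq (div_nonneg hlogN.le hspos.le)]
    have hid2 : (T:ℝ) * (s / 8) = Real.sqrt ((T:ℝ) * Real.log N / 8) := by
      rw [show (T:ℝ) * Real.log N / 8 = ((T:ℝ) * (s / 8)) ^ 2 by
        rw [show ((T:ℝ) * (s / 8)) ^ 2 = (T:ℝ) ^ 2 * s ^ 2 / 64 by ring, hs2]
        field_simp; ring]
      rw [Real.sqrt_sq (by positivity)]
    have h2E : Real.sqrt ((T:ℝ) * Real.log N / 8) + Real.sqrt ((T:ℝ) * Real.log N / 8)
        = Real.sqrt ((T:ℝ) * Real.log N / 2) := by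
      rw [show (T:ℝ) * Real.log N / 2 = 2 ^ 2 * ((T:ℝ) * Real.log N / 8) by ring,
        Real.sqrt_mul (by norm_num : (0:ℝ) ≤ 2 ^ 2),
        Real.sqrt_sq (by norm_num : (0:ℝ) ≤ 2)]
      ring
    have hηr : Real.log N / η + (T:ℝ) * (η / 8)
        = Real.sqrt ((T:ℝ) * Real.log N / 8) + Real.sqrt ((T:ℝ) * Real.log N / 8) := by
      rw [hηeq, hid1, hid2]
    have hregB2 : (∑ t ∈ Finset.range T, expAlgLoss η (fun _ => c) adv y t)
        - (⨅ i : Fin N, ∑ t ∈ Finset.range T, expertLoss adv y t i)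
        ≤ Real.sqrt ((T:ℝ) * Real.log N / 2) := by linarith [hreg, hηr, h2E]
    have hB2B1 : Real.sqrt ((T:ℝ) * Real.log N / 2) ≤ 2 * (Real.log N / (1 - 2 * c)) := by
      have h1 : Real.log N / s ≤ Real.log N / (1 - 2 * c) := by gcongr
      rw [hid1] at h1
      linarith
    have hB2nonneg : 0 ≤ Real.sqrt ((T:ℝ) * Real.log N / 2) := Real.sqrt_nonneg _
    rcases le_total (Real.log N / (1 - 2 * c)) (Real.sqrt ((T:ℝ) * Real.log N / 2)) with h | h
    · rw [min_eq_left h]; linarith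
    · rw [min_eq_right h]; linarith
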